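/- Let G be an index coding instance on n ≥ 1 messages. If every edge of G belongs to a vertex-induced subgraph of G that is a unicycle, then G is critical: for every edge e of G, the capacity region of G with e removed differs from the capacity region of G, i.e., 𝒞(G_e) ≠ 𝒞(G). -/

import Mathlib

namespace IC

/-- A `(t, r)` index code (with per-message lengths `t j` bits and index length
`r` bits) exists for the directed graph with edge relation `E` on vertex set `V`:
there are an encoder `φ` and, for each node `j`, a decoder `ψ j` that recovers
message `x j` from the index `φ x` and the side information `(x i)_{i ∈ A_j}`. -/
def HasCode {V : Type*} (E : V → V → Prop) (t : V → ℕ) (r : ℕ) : Prop :=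
  ∃ (φ : (∀ j : V, Fin (t j) → Fin 2) → (Fin r → Fin 2))
    (ψ : ∀ j : V, (Fin r → Fin 2) → (∀ i : {i : V // E i j}, Fin (t i.1) → Fin 2) →
      (Fin (t j) → Fin 2)),
    ∀ (x : ∀ j : V, Fin (t j) → Fin 2) (j : V),
      ψ j (φ x) (fun i => x i.1) = x j

/-- The broadcast rate `β = inf { r/t : a (t, r) index code exists }`. -/
noncomputable def broadcastRate {V : Type*} (E : V → V → Prop) : ℝ :=
  sInf {ρ : ℝ | ∃ (t r : ℕ), 1 ≤ t ∧ HasCode E (fun _ => t) r ∧ ρ = (r : ℝ) / t}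

end IC
namespace IC

/-- A rate tuple `R` is achievable: it is nonnegative and there is a
`(t_1, …, t_n, r)` index code with `R j ≤ t j / r` for all `j`. -/
def Achievable {n : ℕ} (E : Fin n → Fin n → Prop) (R : Fin n → ℝ) : Prop :=
  (∀ j, 0 ≤ R j) ∧
  ∃ (t : Fin n → ℕ) (r : ℕ), (∀ j, 1 ≤ t j) ∧ 1 ≤ r ∧ HasCode E t r ∧
    ∀ j, R j ≤ (t j : ℝ) / r

/-- The capacity region `𝒞(G)`: the closure of the set of achievable rate tuples. -/
noncomputable def capacityRegion {n : ℕ} (E : Fin n → Fin n → Prop) : Set (Fin n → ℝ) :=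
  closure {R | Achievable E R}

end IC
namespace IC

/-- The graph obtained by removing the edge `(a, b)`. -/
def removeEdge {V : Type*} (E : V → V → Prop) (a b : V) : V → V → Prop :=
  fun x y => E x y ∧ ¬(x = a ∧ y = b)

/-- The subgraph induced on `S` contains a directed cycle. -/
def HasCycleIn {V : Type*} (E : V → V → Prop) (S : Set V) : Prop :=
  ∃ (m : ℕ) (v : Fin (m + 2) → V), Function.Injective v ∧ (∀ i, v i ∈ S) ∧
    ∀ i, E (v i) (v (i + 1))

/-- The MAIS outer bound region `ℛ_MAIS(G)`. -/
def maisRegion {n : ℕ} (E : Fin n → Fin n → Prop) : Set (Fin n → ℝ) :=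
  {R | (∀ j, 0 ≤ R j) ∧
    ∀ S : Finset (Fin n), ¬ HasCycleIn E ↑S → ∑ j ∈ S, R j ≤ 1}

/-- The subgraph induced on `S` is a unicycle: `|S| ≥ 2` and `S` admits an
enumeration `v_0, …, v_{m−1}` such that the edges of the induced subgraph are
exactly the directed Hamiltonian cycle `v_0 → v_1 → ⋯ → v_{m−1} → v_0`. -/
def IsUnicycle {V : Type*} (E : V → V → Prop) (S : Set V) : Prop :=
  ∃ (m : ℕ) (v : Fin (m + 2) → V), Function.Injective v ∧ Set.range v = S ∧
    ∀ a b, a ∈ S → b ∈ S → (E a b ↔ ∃ i, v i = a ∧ v (i + 1) = b)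

/-- The edge `(x, y)` belongs to a unicycle of the graph. -/
def InUnicycle {V : Type*} (E : V → V → Prop) (x y : V) : Prop :=
  E x y ∧ ∃ S : Set V, IsUnicycle E S ∧ x ∈ S ∧ y ∈ S

end IC

namespace IC

lemma transGen_walk {α : Type*} (rel : α → α → Prop) {a b : α}
    (h : Relation.TransGen rel a b) :
    ∃ (L : ℕ) (f : ℕ → α), 1 ≤ L ∧ f 0 = a ∧ f L = b ∧ ∀ i < L, rel (f i) (f (i + 1)) := by
  induction h with
  | @single c hr =>
    refine ⟨1, fun i => if i = 0 then a else c, le_refl 1, by simp, by simp, ?_⟩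
    intro i hi
    interval_cases i
    simpa using hr
  | @tail c d h₁ hr ih =>
    obtain ⟨L, f, hL, h0, hLb, hwalk⟩ := ih
    refine ⟨L + 1, fun i => if i ≤ L then f i else d, by omega, by simpa using h0, by simp, ?_⟩
    intro i hi
    show rel (if i ≤ L then f i else d) (if i + 1 ≤ L then f (i + 1) else d)
    rcases lt_or_eq_of_le (Nat.lt_succ_iff.mp hi) with hiL | hiL
    · rw [if_pos (le_of_lt hiL), if_pos (by omega : i + 1 ≤ L)]
      exact hwalk i hiL
    · rw [if_pos (le_of_eq hiL), if_neg (by omega : ¬ i + 1 ≤ L), hiL, hLb]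
      exact hr

lemma walk_to_cycle {n : ℕ} (E' : Fin n → Fin n → Prop) (S' : Finset (Fin n))
    (hirr : ∀ a, ¬ E' a a) :
    ∀ L : ℕ, ∀ f : ℕ → Fin n, 1 ≤ L → f 0 = f L →
      (∀ i < L, (E' (f i) (f (i + 1)) ∧ f i ∈ S' ∧ f (i + 1) ∈ S')) →
      HasCycleIn E' ↑S' := by
  intro L
  induction L using Nat.strong_induction_on with
  | _ L ih =>
    intro f hL hclosed hwalk
    by_cases hrep : ∃ i j, i < j ∧ j ≤ L ∧ j - i < L ∧ f i = f j
    · obtain ⟨i, j, hij, hjL, hgap, hfij⟩ := hrep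
      refine ih (j - i) hgap (fun s => f (i + s)) (by omega) ?_ ?_
      · show f (i + 0) = f (i + (j - i))
        rw [Nat.add_zero, Nat.add_sub_cancel' (le_of_lt hij)]
        exact hfij
      · intro s hs
        have h1 : i + s < L := by omega
        show E' (f (i + s)) (f (i + (s + 1))) ∧ f (i + s) ∈ S' ∧ f (i + (s + 1)) ∈ S'
        rw [show i + (s + 1) = i + s + 1 from by omega]
        exact hwalk (i + s) h1
    · push_neg at hrep
      -- L ≥ 2
      have hL2 : 2 ≤ L := by
        by_contra hcon
        have hL1 : L = 1 := by omega
        subst hL1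
        have := hwalk 0 (by omega)
        rw [hclosed] at this
        exact hirr _ this.1
      obtain ⟨q, rfl⟩ : ∃ q, L = q + 2 := ⟨L - 2, by omega⟩
      refine ⟨q, fun s => f s.val, ?_, ?_, ?_⟩
      · intro s s' hss
        have hss' : f s.val = f s'.val := hss
        rcases lt_trichotomy s.val s'.val with hlt | heqv | hlt
        · exact absurd hss' (hrep s.val s'.val hlt (by omega) (by omega))
        · exact Fin.ext heqv
        · exact absurd hss'.symm (hrep s'.val s.val hlt (by omega) (by omega))
      · intro s
        exact (hwalk s.val (by omega)).2.1
      · intro s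
        by_cases hlast : s.val < q + 1
        · have hval : ((s + 1 : Fin (q + 2))).val = s.val + 1 := by
            simp [Fin.add_def]
            omega
          show E' (f s.val) (f ((s + 1 : Fin (q+2))).val)
          rw [hval]
          exact (hwalk s.val (by omega)).1
        · have hsv : s.val = q + 1 := by omega
          have hval : ((s + 1 : Fin (q + 2))).val = 0 := by
            simp [Fin.add_def, hsv]
          show E' (f s.val) (f ((s + 1 : Fin (q+2))).val)
          rw [hval, hsv]
          have := (hwalk (q + 1) (by omega)).1
          rwa [← hclosed] at this

lemma no_cycle_wf {n : ℕ} (E' : Fin n → Fin n → Prop) (S' : Finset (Fin n))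
    (hirr : ∀ a, ¬ E' a a) (hnc : ¬ HasCycleIn E' ↑S') :
    WellFounded (fun a b => E' a b ∧ a ∈ S' ∧ b ∈ S') := by
  set rel : Fin n → Fin n → Prop := fun a b => E' a b ∧ a ∈ S' ∧ b ∈ S' with hrel
  have hTG : ∀ a, ¬ Relation.TransGen rel a a := by
    intro a ha
    obtain ⟨L, f, hL, h0, hLa, hwalk⟩ := transGen_walk rel ha
    exact hnc (walk_to_cycle E' S' hirr L f hL (by rw [h0, hLa]) (fun i hi => hwalk i hi))
  have h2 : IsIrrefl (Fin n) (Relation.TransGen rel) := ⟨hTG⟩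
  have hwf := Finite.wellFounded_of_trans_of_irrefl (Relation.TransGen rel)
  exact Subrelation.wf (fun {a b} hab => Relation.TransGen.single hab) hwf

lemma sum_t_le_r {n : ℕ} (E' : Fin n → Fin n → Prop) (S' : Finset (Fin n)) (t : Fin n → ℕ)
    (r : ℕ) (hirr : ∀ a, ¬ E' a a) (hnc : ¬ HasCycleIn E' ↑S') (hc : HasCode E' t r) :
    ∑ j ∈ S', t j ≤ r := by
  classical
  obtain ⟨φ, ψ, hφψ⟩ := hc
  have hwf := no_cycle_wf E' S' hirr hnc
  set X : (∀ j : ↥S', Fin (t j.1) → Fin 2) → (∀ j : Fin n, Fin (t j) → Fin 2) :=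
    fun u j => if h : j ∈ S' then u ⟨j, h⟩ else fun _ => 0 with hXdef
  have hinj : Function.Injective (fun u => φ (X u)) := by
    intro u u' huu
    simp only at huu
    have key : ∀ j, X u j = X u' j := by
      intro j
      induction j using hwf.induction with
      | _ j ihj =>
        by_cases hj : j ∈ S'
        · have h1 := hφψ (X u) j
          have h2 := hφψ (X u') j
          have hside : (fun i : {i // E' i j} => X u i.1) = (fun i : {i // E' i j} => X u' i.1) := by
            funext i
            by_cases hi : i.1 ∈ S'
            · exact ihj i.1 ⟨i.2, hi, hj⟩
            · simp [hXdef, hi]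
          rw [← h1, ← h2, huu, hside]
        · simp [hXdef, hj]
    funext j
    have hj := key j.1
    simpa [hXdef, j.2] using hj
  have hcard := Fintype.card_le_of_injective _ hinj
  simp only [Fintype.card_pi, Finset.prod_const, Finset.card_univ, Fintype.card_fin] at hcard
  rw [Finset.prod_pow_eq_pow_sum] at hcard
  rw [Finset.sum_coe_sort S' t] at hcard
  exact (Nat.pow_le_pow_iff_right (by norm_num : 1 < 2)).mp hcard

lemma hasCode_of_determined {V : Type*} (E : V → V → Prop) (t : V → ℕ) (r : ℕ)
    (φ : (∀ j : V, Fin (t j) → Fin 2) → (Fin r → Fin 2))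
    (hdet : ∀ (j : V) (x x' : ∀ j : V, Fin (t j) → Fin 2), φ x = φ x' →
      (∀ i, E i j → x i = x' i) → x j = x' j) : HasCode E t r := by
  classical
  refine ⟨φ, fun j idx side =>
    if h' : ∃ x, φ x = idx ∧ ∀ i : {i // E i j}, x i.1 = side i then h'.choose j
    else fun _ => 0, fun x j => ?_⟩
  have hx : ∃ x', φ x' = φ x ∧ ∀ i : {i : V // E i j}, x' i.1 = (fun i : {i // E i j} => x i.1) i :=
    ⟨x, rfl, fun _ => rfl⟩
  have hgoal : (if h' : ∃ x', φ x' = φ x ∧ ∀ i : {i : V // E i j},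
      x' i.1 = (fun i : {i // E i j} => x i.1) i then h'.choose j else fun _ => 0) = x j := by
    rw [dif_pos hx]
    exact hdet j _ x hx.choose_spec.1 (fun i hEij => hx.choose_spec.2 ⟨i, hEij⟩)
  exact hgoal

open Fin.NatCast in
lemma unicycle_no_cycle_after_remove {n m : ℕ} (E : Fin n → Fin n → Prop)
    (v : Fin (m + 2) → Fin n) (hvinj : Function.Injective v)
    (hiff : ∀ a b, a ∈ Set.range v → b ∈ Set.range v →
      (E a b ↔ ∃ i, v i = a ∧ v (i + 1) = b))
    (x y : Fin n) (ix : Fin (m + 2)) (hix : v ix = x) (hy : v (ix + 1) = y) :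
    ¬ HasCycleIn (removeEdge E x y) (Set.range v) := by
  rintro ⟨p, w, -, wmem, wedge⟩
  choose g hg using fun s => wmem s
  have hstep : ∀ s, g (s + 1) = g s + 1 := by
    intro s
    obtain ⟨hEw, -⟩ := wedge s
    obtain ⟨i, hi1, hi2⟩ := (hiff (w s) (w (s + 1)) ⟨g s, hg s⟩ ⟨g (s + 1), hg (s + 1)⟩).mp hEw
    have hieq : i = g s := hvinj (hi1.trans (hg s).symm)
    subst hieq
    exact hvinj ((hg (s + 1)).trans hi2.symm)
  have hcl : ∀ l : ℕ, ∃ s, g s = g 0 + (l : Fin (m + 2)) := by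
    intro l
    induction l with
    | zero => exact ⟨0, by simp⟩
    | succ l ihl =>
      obtain ⟨s, hs⟩ := ihl
      refine ⟨s + 1, ?_⟩
      rw [hstep s, hs]
      push_cast
      abel
  obtain ⟨s, hs⟩ := hcl ((ix - g 0).val)
  have hgs : g s = ix := by
    rw [hs, Fin.cast_val_eq_self]
    abel
  have hws : w s = x := by rw [← hg s, hgs, hix]
  have hws1 : w (s + 1) = y := by rw [← hg (s + 1), hstep s, hgs, hy]
  exact (wedge s).2 ⟨hws, hws1⟩

lemma capacity_sum_le {n : ℕ} (E' : Fin n → Fin n → Prop) (S' : Finset (Fin n))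
    (hkey : ∀ (t : Fin n → ℕ) (r : ℕ), HasCode E' t r → ∑ j ∈ S', t j ≤ r)
    (R : Fin n → ℝ) (hR : R ∈ capacityRegion E') :
    ∑ j ∈ S', R j ≤ 1 := by
  have hclosed : IsClosed {R : Fin n → ℝ | ∑ j ∈ S', R j ≤ 1} :=
    isClosed_le (continuous_finset_sum _ fun j _ => continuous_apply j) continuous_const
  refine closure_minimal ?_ hclosed hR
  rintro R ⟨hR0, t, r, ht, hr, hcode, hle⟩
  have hsum := hkey t r hcode
  have hrpos : (0 : ℝ) < r := by exact_mod_cast hr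
  calc ∑ j ∈ S', R j ≤ ∑ j ∈ S', (t j : ℝ) / r := Finset.sum_le_sum (fun j _ => hle j)
    _ = (∑ j ∈ S', (t j : ℝ)) / r := by rw [Finset.sum_div]
    _ ≤ (r : ℝ) / r := by
        gcongr
        exact_mod_cast hsum
    _ = 1 := div_self (ne_of_gt hrpos)

lemma cycle_code {n m k : ℕ} (hk : 1 ≤ k) (E : Fin n → Fin n → Prop)
    (v : Fin (m + 2) → Fin n) (hvinj : Function.Injective v)
    (hiff : ∀ a b, a ∈ Set.range v → b ∈ Set.range v →
      (E a b ↔ ∃ i, v i = a ∧ v (i + 1) = b)) :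
    HasCode E (fun j => if j ∈ Finset.image v Finset.univ then k else 1)
      ((m + 1) * k + Fintype.card {j : Fin n // j ∉ Finset.image v Finset.univ}) := by
  classical
  set Sf := Finset.image v Finset.univ with hSf
  set t : Fin n → ℕ := fun j => if j ∈ Sf then k else 1 with ht
  have htk : ∀ i, t (v i) = k := fun i => if_pos (Finset.mem_image_of_mem v (Finset.mem_univ i))
  have htpos : ∀ j, 0 < t j := by
    intro j
    rw [ht]
    dsimp only
    split <;> omega
  set c := Fintype.card {j : Fin n // j ∉ Sf} with hc
  let pack : ((Fin (m + 1) → Fin k → Fin 2) × ({j : Fin n // j ∉ Sf} → Fin 2)) ≃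
      (Fin ((m + 1) * k + c) → Fin 2) :=
    (Equiv.prodCongr (((Equiv.curry _ _ _).symm).trans
        (Equiv.arrowCongr finProdFinEquiv (Equiv.refl _)))
      (Equiv.arrowCongr (Fintype.equivFin _) (Equiv.refl _))).trans
      ((Equiv.sumArrowEquivProdArrow _ _ _).symm.trans
        (Equiv.arrowCongr finSumFinEquiv (Equiv.refl _)))
  refine hasCode_of_determined E t _
    (fun x => pack
      (fun l b => x (v l.castSucc) (Fin.cast (htk l.castSucc).symm b)
          + x (v l.succ) (Fin.cast (htk l.succ).symm b),
       fun j => x j.1 ⟨0, htpos j.1⟩)) ?_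
  intro j x x' hφ hside
  have hpair := pack.injective hφ
  have hy := congrArg Prod.fst hpair
  have hz := congrArg Prod.snd hpair
  by_cases hj : j ∈ Sf
  · obtain ⟨i, -, rfl⟩ := Finset.mem_image.mp hj
    funext b
    by_cases h0 : i = 0
    · subst h0
      set bk : Fin k := Fin.cast (htk 0) b with hbk
      set F : (∀ j, Fin (t j) → Fin 2) → Fin (m + 2) → Fin 2 :=
        fun x0 l => x0 (v l) (Fin.cast (htk l).symm bk) with hF
      have hyl : ∀ l : Fin (m + 1),
          F x l.castSucc + F x l.succ = F x' l.castSucc + F x' l.succ :=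
        fun l => congrFun (congrFun hy l) bk
      have hedge : E (v (Fin.last (m + 1))) (v 0) :=
        (hiff _ _ ⟨_, rfl⟩ ⟨_, rfl⟩).mpr ⟨Fin.last (m + 1), rfl, by rw [Fin.last_add_one]⟩
      have hsv : F x (Fin.last (m + 1)) = F x' (Fin.last (m + 1)) :=
        congrFun (hside (v (Fin.last (m + 1))) hedge) _
      have hsum : ∀ x0 : (∀ j, Fin (t j) → Fin 2),
          ∑ l : Fin (m + 1), (F x0 l.castSucc + F x0 l.succ)
            = F x0 (Fin.last (m + 1)) + F x0 0 := by
        intro x0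
        rw [Finset.sum_add_distrib]
        have e1 : ∑ l : Fin (m + 1), F x0 l.castSucc
            = (∑ l : Fin (m + 2), F x0 l) - F x0 (Fin.last (m + 1)) := by
          rw [Fin.sum_univ_castSucc (f := F x0)]; abel
        have e2 : ∑ l : Fin (m + 1), F x0 l.succ
            = (∑ l : Fin (m + 2), F x0 l) - F x0 0 := by
          rw [Fin.sum_univ_succ (f := F x0)]; abel
        rw [e1, e2]
        have h2 : ∀ a b c : Fin 2, (a - b) + (a - c) = b + c := by decide
        exact h2 _ _ _
      have hsums : F x (Fin.last (m + 1)) + F x 0 = F x' (Fin.last (m + 1)) + F x' 0 := by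
        rw [← hsum x, ← hsum x']
        exact Finset.sum_congr rfl (fun l _ => hyl l)
      rw [hsv] at hsums
      have hfin : F x 0 = F x' 0 := add_left_cancel hsums
      have hcast : Fin.cast (htk 0).symm bk = b := by
        apply Fin.ext
        simp [hbk]
      rw [hF] at hfin
      simpa [hcast] using hfin
    · set bk : Fin k := Fin.cast (htk i) b with hbk
      set F : (∀ j, Fin (t j) → Fin 2) → Fin (m + 2) → Fin 2 :=
        fun x0 l => x0 (v l) (Fin.cast (htk l).symm bk) with hF
      have hyl : ∀ l : Fin (m + 1),
          F x l.castSucc + F x l.succ = F x' l.castSucc + F x' l.succ :=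
        fun l => congrFun (congrFun hy l) bk
      have hi0 : i.val ≠ 0 := fun hh => h0 (Fin.ext hh)
      set l : Fin (m + 1) := ⟨i.val - 1, by omega⟩ with hl
      have hsucc : l.succ = i := by
        apply Fin.ext
        simp [hl, Fin.val_succ]
        omega
      have hedge : E (v l.castSucc) (v i) :=
        (hiff _ _ ⟨_, rfl⟩ ⟨_, rfl⟩).mpr
          ⟨l.castSucc, rfl, by rw [Fin.coeSucc_eq_succ, hsucc]⟩
      have hsv : F x l.castSucc = F x' l.castSucc :=
        congrFun (hside (v l.castSucc) hedge) _
      have hsums := hyl l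
      rw [hsv] at hsums
      have hfin : F x l.succ = F x' l.succ := add_left_cancel hsums
      rw [hsucc] at hfin
      have hcast : Fin.cast (htk i).symm bk = b := by
        apply Fin.ext
        simp [hbk]
      rw [hF] at hfin
      simpa [hcast] using hfin
  · funext b
    have h00 : x j ⟨0, htpos j⟩ = x' j ⟨0, htpos j⟩ := congrFun hz ⟨j, hj⟩
    have ht1 : t j = 1 := by rw [ht]; exact if_neg hj
    have hb : b = ⟨0, htpos j⟩ := by
      apply Fin.ext
      have hlt : (b : ℕ) < 1 := by rw [← ht1]; exact b.isLt
      simpa using Nat.lt_one_iff.mp hlt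
    rw [hb]
    exact h00

lemma limit_aux (a c : ℕ) :
    Filter.Tendsto (fun k : ℕ => (k : ℝ) / (((a : ℝ) + 1) * k + c)) Filter.atTop
      (nhds (1 / ((a : ℝ) + 1))) := by
  have h1 : Filter.Tendsto (fun k : ℕ => ((a : ℝ) + 1) + c / k) Filter.atTop
      (nhds (((a : ℝ) + 1) + 0)) :=
    tendsto_const_nhds.add (tendsto_const_div_atTop_nhds_zero_nat (c : ℝ))
  rw [add_zero] at h1
  have h2 := (tendsto_const_nhds (x := (1 : ℝ))).div h1 (by positivity)
  apply h2.congr'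
  filter_upwards [Filter.eventually_ge_atTop 1] with k hk
  have hk0 : (k : ℝ) ≠ 0 := by
    have : (1 : ℝ) ≤ (k : ℝ) := by exact_mod_cast hk
    linarith
  have hd : ((a : ℝ) + 1) * k + c ≠ 0 := by positivity
  simp only [Pi.div_apply]
  field_simp


end IC

/-- If every edge of `G` belongs to a vertex-induced subgraph
that is a unicycle, then `G` is critical: removing any edge strictly changes
the capacity region. -/
theorem critical_of_union_of_unicycles
    (n : ℕ) (hn : 1 ≤ n)
    (E : Fin n → Fin n → Prop) (hE : ∀ i, ¬ E i i)
    (h : ∀ x y, E x y → IC.InUnicycle E x y) :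
    ∀ x y, E x y →
      IC.capacityRegion (IC.removeEdge E x y) ≠ IC.capacityRegion E := by
  classical
  intro x y hxy heq
  obtain ⟨-, S, ⟨m, v, hvinj, hvrange, hiff⟩, hxS, hyS⟩ := h x y hxy
  subst hvrange
  set Sf := Finset.image v Finset.univ with hSf
  have hSfcoe : (↑Sf : Set (Fin n)) = Set.range v := by
    ext j; simp [hSf]
  set c := Fintype.card {j : Fin n // j ∉ Sf} with hc
  -- the limiting rate point
  set R : Fin n → ℝ := fun j => if j ∈ Sf then 1 / ((m : ℝ) + 1) else 0 with hRdef
  -- Part 1: achievability in G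
  have hach : ∀ k : ℕ, 1 ≤ k →
      (fun j => if j ∈ Sf then (k : ℝ) / ((((m + 1) * k + c : ℕ)) : ℝ) else 0) ∈
        {R : Fin n → ℝ | IC.Achievable E R} := by
    intro k hk
    have hr1 : 1 ≤ (m + 1) * k + c := by
      have : 1 * 1 ≤ (m + 1) * k := Nat.mul_le_mul (by omega) hk
      omega
    refine ⟨?_, fun j => if j ∈ Sf then k else 1, (m + 1) * k + c, ?_, hr1,
      IC.cycle_code hk E v hvinj hiff, ?_⟩
    · intro j; dsimp only; split
      · positivity
      · exact le_refl 0
    · intro j; dsimp only; split <;> omega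
    · intro j
      dsimp only
      by_cases hj : j ∈ Sf
      · rw [if_pos hj, if_pos hj]
      · rw [if_neg hj, if_neg hj]
        positivity
  have hmem : R ∈ IC.capacityRegion E := by
    refine mem_closure_of_tendsto
      (f := fun k : ℕ => (fun j => if j ∈ Sf then (k : ℝ) / ((((m + 1) * k + c : ℕ)) : ℝ) else 0))
      (b := Filter.atTop) ?_ ?_
    · rw [tendsto_pi_nhds]
      intro j
      by_cases hj : j ∈ Sf
      · simp only [if_pos hj, hRdef]
        have hfe : (fun k : ℕ => (k : ℝ) / ((((m + 1) * k + c : ℕ)) : ℝ))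
            = fun k : ℕ => (k : ℝ) / (((m : ℝ) + 1) * k + c) := by
          funext k; push_cast; ring_nf
        rw [hfe]
        exact IC.limit_aux m c
      · simp only [if_neg hj, hRdef]
        exact tendsto_const_nhds
    · filter_upwards [Filter.eventually_ge_atTop 1] with k hk using hach k hk
  rw [← heq] at hmem
  -- Part 2: the bound after removing the edge
  obtain ⟨ix, hix⟩ := hxS
  have hyx : v (ix + 1) = y := by
    obtain ⟨i, hi1, hi2⟩ := (hiff x y ⟨ix, hix⟩ hyS).mp hxy
    have hieq : i = ix := hvinj (hi1.trans hix.symm)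
    rw [← hieq]; exact hi2
  have hnc : ¬ IC.HasCycleIn (IC.removeEdge E x y) ↑Sf := by
    rw [hSfcoe]
    exact IC.unicycle_no_cycle_after_remove E v hvinj hiff x y ix hix hyx
  have hirr' : ∀ a, ¬ IC.removeEdge E x y a a := fun a ha => hE a ha.1
  have hb := IC.capacity_sum_le (IC.removeEdge E x y) Sf
    (fun t r hcode => IC.sum_t_le_r _ Sf t r hirr' hnc hcode) R hmem
  have hcard : Sf.card = m + 2 := by
    rw [hSf, Finset.card_image_of_injective _ hvinj, Finset.card_univ, Fintype.card_fin]
  have hsumR : ∑ j ∈ Sf, R j = ((m : ℝ) + 2) * (1 / ((m : ℝ) + 1)) := by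
    rw [hRdef]
    rw [Finset.sum_congr rfl (fun j hj => if_pos hj), Finset.sum_const, hcard]
    push_cast
    ring
  rw [hsumR, mul_one_div, div_le_one (by positivity)] at hb
  linarith
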